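/- arXiv:1306.2580 — 2 statements merged into one kernel-verified Lean document; each statement's English description precedes it below -/
import Mathlib

section
/- Let Ω ⊂ ℝⁿ be a bounded measurable set, h > 0, and let ϱ : Ω → ℝ₊ be measurable with ∫_Ω ϱ dx ≤ h|Ω|. Let π₊ : ℝ₊ → ℝ₊ be a nondecreasing measurable function with π₊(ϱ)²/ϱ integrable on {ϱ ≥ 2h}. Then (1/|Ω|)(∫_Ω π₊(ϱ) dx)² ≤ h ∫_Ω π₊(ϱ)²/ϱ dx, and moreover h ∫_{ϱ≥2h} π₊(ϱ)²/ϱ dx ≤ (1/2)∫_Ω π₊(ϱ)² dx. -/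
open MeasureTheory Set Real

/-- Cauchy–Schwarz estimate controlling the square of the mean of the positive
pressure part by weighted L² norms. -/
theorem stmt1 (n : ℕ)
    (Ω : Set (Fin n → ℝ)) (hΩmeas : MeasurableSet Ω) (hΩbdd : Bornology.IsBounded Ω)
    (h : ℝ) (hh : 0 < h)
    (ϱ : (Fin n → ℝ) → ℝ) (hϱmeas : Measurable ϱ) (hϱnn : ∀ x, 0 ≤ ϱ x)
    (hϱint : IntegrableOn ϱ Ω volume)
    (hmass : ∫ x in Ω, ϱ x ≤ h * (volume Ω).toReal)
    (piP : ℝ → ℝ) (hπmeas : Measurable piP) (hπnn : ∀ t, 0 ≤ piP t)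
    (hπ0 : piP 0 = 0) (hπmono : Monotone piP)
    (hint1 : IntegrableOn (fun x => piP (ϱ x)) Ω volume)
    (hint2 : IntegrableOn (fun x => (piP (ϱ x)) ^ 2 / ϱ x) Ω volume)
    (hint3 : IntegrableOn (fun x => (piP (ϱ x)) ^ 2) Ω volume) :
    (volume Ω).toReal⁻¹ * (∫ x in Ω, piP (ϱ x)) ^ 2
        ≤ h * ∫ x in Ω, (piP (ϱ x)) ^ 2 / ϱ x ∧
    h * ∫ x in Ω ∩ {x | 2 * h ≤ ϱ x}, (piP (ϱ x)) ^ 2 / ϱ x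
        ≤ (1 / 2) * ∫ x in Ω, (piP (ϱ x)) ^ 2 := by
  have hInn : 0 ≤ ∫ x in Ω, (piP (ϱ x)) ^ 2 / ϱ x := by
    refine setIntegral_nonneg hΩmeas fun x _ => ?_
    exact div_nonneg (sq_nonneg _) (hϱnn x)
  constructor
  · -- Part 1: Cauchy–Schwarz
    set f : (Fin n → ℝ) → ℝ := fun x => Real.sqrt (ϱ x) with hf_def
    set g : (Fin n → ℝ) → ℝ := fun x => piP (ϱ x) / Real.sqrt (ϱ x) with hg_def
    have hfg : ∀ x, f x * g x = piP (ϱ x) := by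
      intro x
      by_cases hx : ϱ x = 0
      · simp [hf_def, hg_def, hx, hπ0]
      · have : Real.sqrt (ϱ x) ≠ 0 := by
          rw [Real.sqrt_ne_zero']
          exact lt_of_le_of_ne (hϱnn x) (Ne.symm hx)
        show Real.sqrt (ϱ x) * (piP (ϱ x) / Real.sqrt (ϱ x)) = piP (ϱ x)
        field_simp
    have hfsq : ∀ x, f x ^ (2:ℝ) = ϱ x := by
      intro x
      rw [hf_def]
      rw [show ((2:ℝ)) = ((2:ℕ):ℝ) by norm_num, Real.rpow_natCast]
      exact Real.sq_sqrt (hϱnn x)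
    have hgsq : ∀ x, g x ^ (2:ℝ) = (piP (ϱ x)) ^ 2 / ϱ x := by
      intro x
      rw [hg_def]
      rw [show ((2:ℝ)) = ((2:ℕ):ℝ) by norm_num, Real.rpow_natCast]
      rw [div_pow, Real.sq_sqrt (hϱnn x)]
    have hconj : Real.HolderConjugate 2 2 := Real.HolderConjugate.two_two
    have hfmeas : AEStronglyMeasurable f (volume.restrict Ω) :=
      (hϱmeas.sqrt).aestronglyMeasurable
    have hgmeas : AEStronglyMeasurable g (volume.restrict Ω) :=
      ((hπmeas.comp hϱmeas).div hϱmeas.sqrt).aestronglyMeasurable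
    have hfmem : MemLp f (ENNReal.ofReal 2) (volume.restrict Ω) := by
      rw [show ENNReal.ofReal 2 = 2 by simp]
      rw [memLp_two_iff_integrable_sq hfmeas]
      have : (fun x => f x ^ 2) = fun x => ϱ x := by
        funext x
        have := hfsq x
        rw [show ((2:ℝ)) = ((2:ℕ):ℝ) by norm_num, Real.rpow_natCast] at this
        exact this
      rw [this]; exact hϱint
    have hgmem : MemLp g (ENNReal.ofReal 2) (volume.restrict Ω) := by
      rw [show ENNReal.ofReal 2 = 2 by simp]
      rw [memLp_two_iff_integrable_sq hgmeas]
      have : (fun x => g x ^ 2) = fun x => (piP (ϱ x)) ^ 2 / ϱ x := by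
        funext x
        have := hgsq x
        rw [show ((2:ℝ)) = ((2:ℕ):ℝ) by norm_num, Real.rpow_natCast] at this
        exact this
      rw [this]; exact hint2
    have holder : ∫ x in Ω, f x * g x ≤ (∫ x in Ω, f x ^ (2:ℝ)) ^ (1/(2:ℝ)) * (∫ x in Ω, g x ^ (2:ℝ)) ^ (1/(2:ℝ)) :=
      MeasureTheory.integral_mul_le_Lp_mul_Lq_of_nonneg hconj
      (Filter.Eventually.of_forall fun x => Real.sqrt_nonneg _)
      (Filter.Eventually.of_forall fun x =>
        div_nonneg (hπnn _) (Real.sqrt_nonneg _)) hfmem hgmem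
    simp only [hfg, hfsq, hgsq] at holder
    -- holder : ∫ piP(ϱ) ≤ (∫ ϱ)^(1/2) * (∫ π²/ϱ)^(1/2)
    have hIϱ : 0 ≤ ∫ x in Ω, ϱ x := setIntegral_nonneg hΩmeas fun x _ => hϱnn x
    have hπint_nn : 0 ≤ ∫ x in Ω, piP (ϱ x) :=
      setIntegral_nonneg hΩmeas fun x _ => hπnn _
    have hsq : (∫ x in Ω, piP (ϱ x)) ^ 2 ≤ (∫ x in Ω, ϱ x) * ∫ x in Ω, (piP (ϱ x)) ^ 2 / ϱ x := by
      calc (∫ x in Ω, piP (ϱ x)) ^ 2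
          ≤ ((∫ x in Ω, ϱ x) ^ ((1:ℝ)/2) * (∫ x in Ω, (piP (ϱ x)) ^ 2 / ϱ x) ^ ((1:ℝ)/2)) ^ 2 :=
            pow_le_pow_left₀ hπint_nn holder 2
        _ = (∫ x in Ω, ϱ x) * ∫ x in Ω, (piP (ϱ x)) ^ 2 / ϱ x := by
            rw [mul_pow, ← Real.rpow_natCast ((∫ x in Ω, ϱ x) ^ ((1:ℝ)/2)) 2,
              ← Real.rpow_natCast ((∫ x in Ω, (piP (ϱ x)) ^ 2 / ϱ x) ^ ((1:ℝ)/2)) 2,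
              ← Real.rpow_mul hIϱ, ← Real.rpow_mul hInn]
            norm_num
    have hsq2 : (∫ x in Ω, piP (ϱ x)) ^ 2
        ≤ (h * (volume Ω).toReal) * ∫ x in Ω, (piP (ϱ x)) ^ 2 / ϱ x :=
      hsq.trans (mul_le_mul_of_nonneg_right hmass hInn)
    rcases eq_or_lt_of_le (ENNReal.toReal_nonneg (a := volume Ω)) with ht | ht
    · rw [← ht]
      simp only [inv_zero, zero_mul]
      positivity
    · rw [inv_mul_le_iff₀ ht]
      calc (∫ x in Ω, piP (ϱ x)) ^ 2
          ≤ (h * (volume Ω).toReal) * ∫ x in Ω, (piP (ϱ x)) ^ 2 / ϱ x := hsq2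
        _ = h * ((∫ x in Ω, (piP (ϱ x)) ^ 2 / ϱ x)) * (volume Ω).toReal := by ring
        _ = (volume Ω).toReal * (h * ∫ x in Ω, (piP (ϱ x)) ^ 2 / ϱ x) := by ring
  · -- Part 2
    set S := Ω ∩ {x | 2 * h ≤ ϱ x} with hS_def
    have hSmeas : MeasurableSet S :=
      hΩmeas.inter (measurableSet_le measurable_const hϱmeas)
    have hpt : ∀ x ∈ S, h * ((piP (ϱ x)) ^ 2 / ϱ x) ≤ (1/2) * (piP (ϱ x)) ^ 2 := by
      rintro x ⟨-, hx⟩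
      have hϱpos : 0 < ϱ x := lt_of_lt_of_le (by linarith) hx
      rw [mul_div_assoc', div_le_iff₀ hϱpos]
      calc h * (piP (ϱ x)) ^ 2 = (1/2) * (piP (ϱ x)) ^ 2 * (2*h) := by ring
        _ ≤ (1/2) * (piP (ϱ x)) ^ 2 * ϱ x := by
            apply mul_le_mul_of_nonneg_left hx; positivity
    have hint2S : IntegrableOn (fun x => h * ((piP (ϱ x)) ^ 2 / ϱ x)) S volume :=
      ((hint2.mono_set inter_subset_left).const_mul h)
    have hint3S : IntegrableOn (fun x => (1/2) * (piP (ϱ x)) ^ 2) S volume :=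
      ((hint3.mono_set inter_subset_left).const_mul _)
    calc h * ∫ x in S, (piP (ϱ x)) ^ 2 / ϱ x
        = ∫ x in S, h * ((piP (ϱ x)) ^ 2 / ϱ x) := (integral_const_mul _ _).symm
      _ ≤ ∫ x in S, (1/2) * (piP (ϱ x)) ^ 2 :=
          setIntegral_mono_on hint2S hint3S hSmeas hpt
      _ ≤ ∫ x in Ω, (1/2) * (piP (ϱ x)) ^ 2 := by
          apply setIntegral_mono_set (hint3.const_mul _)
            (Filter.Eventually.of_forall fun x => by positivity)
            (HasSubset.Subset.eventuallyLE inter_subset_left)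
      _ = (1/2) * ∫ x in Ω, (piP (ϱ x)) ^ 2 := integral_const_mul _ _
end

section
/- Let Ω ⊂ ℝⁿ be a bounded measurable set and let P : ℝ₊ → ℝ be continuous and nondecreasing. Suppose ϱ_n, ϱ : Ω → [c, C] (0 < c ≤ C < ∞) are measurable, ϱ_n ⇀* ϱ in L^∞(Ω), P(ϱ_n) ⇀* q in L^∞(Ω), and ∫_Ω P(ϱ_n) ϱ_n dx → ∫_Ω q ϱ dx. Then q = P(ϱ) almost everywhere in Ω. -/
set_option maxHeartbeats 1000000


open MeasureTheory Set Real Filter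

/-- The Minty monotone operator trick: weak-* convergence of `ϱ_n` and `P(ϱ_n)`
together with convergence of `∫ P(ϱ_n)ϱ_n` to `∫ q ϱ` identifies the weak limit
of `P(ϱ_n)` as `P(ϱ)`. -/
theorem stmt10 (N : ℕ)
    (Ω : Set (Fin N → ℝ)) (hΩmeas : MeasurableSet Ω) (hΩb : Bornology.IsBounded Ω)
    (c C : ℝ) (hc : 0 < c) (hcC : c ≤ C)
    (P : ℝ → ℝ) (hPcont : ContinuousOn P (Ici 0)) (hPmono : MonotoneOn P (Ici 0))
    (ϱn : ℕ → (Fin N → ℝ) → ℝ) (ϱ q : (Fin N → ℝ) → ℝ)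
    (hmeas : ∀ n, Measurable (ϱn n)) (hϱmeas : Measurable ϱ) (hqmeas : Measurable q)
    (hbnd : ∀ n, ∀ x ∈ Ω, ϱn n x ∈ Icc c C) (hϱbnd : ∀ x ∈ Ω, ϱ x ∈ Icc c C)
    (hqint : IntegrableOn q Ω volume)
    (hweak1 : ∀ φ : (Fin N → ℝ) → ℝ, IntegrableOn φ Ω volume →
      Tendsto (fun n => ∫ x in Ω, ϱn n x * φ x) atTop
        (nhds (∫ x in Ω, ϱ x * φ x)))
    (hweak2 : ∀ φ : (Fin N → ℝ) → ℝ, IntegrableOn φ Ω volume →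
      Tendsto (fun n => ∫ x in Ω, P (ϱn n x) * φ x) atTop
        (nhds (∫ x in Ω, q x * φ x)))
    (hprod : Tendsto (fun n => ∫ x in Ω, P (ϱn n x) * ϱn n x) atTop
      (nhds (∫ x in Ω, q x * ϱ x))) :
    ∀ᵐ x ∂(volume.restrict Ω), q x = P (ϱ x) := by
  have hCc : (0:ℝ) ≤ C + c := by linarith
  have hfin : volume Ω ≠ ⊤ := hΩb.measure_lt_top.ne
  -- bounded measurable functions are integrable on Ω
  have hint : ∀ (f : (Fin N → ℝ) → ℝ) (M : ℝ), Measurable f → (∀ x ∈ Ω, |f x| ≤ M) →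
      IntegrableOn f Ω volume := by
    intro f M hf hb
    apply Measure.integrableOn_of_bounded hfin hf.aestronglyMeasurable (M := M)
    filter_upwards [ae_restrict_mem hΩmeas] with x hx
    simpa [Real.norm_eq_abs] using hb x hx
  -- the clamped pressure
  set Q : ℝ → ℝ := fun t => P (max 0 (min t (C + c))) with hQdef
  have hclamp : ∀ t : ℝ, max 0 (min t (C + c)) ∈ Icc (0:ℝ) (C + c) := by
    intro t
    constructor
    · exact le_max_left _ _
    · exact max_le hCc (min_le_right _ _)
  have Qcont : Continuous Q := by
    apply hPcont.comp_continuous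
    · exact continuous_const.max (continuous_id.min continuous_const)
    · intro t; exact (hclamp t).1
  have Qmono : Monotone Q := by
    intro a b hab
    exact hPmono (hclamp a).1 (hclamp b).1
      (max_le_max le_rfl (min_le_min hab le_rfl))
  have Qeq : ∀ t ∈ Icc (0:ℝ) (C + c), Q t = P t := by
    intro t ht
    simp [hQdef, min_eq_left ht.2, max_eq_right ht.1]
  have QeqIcc : ∀ t ∈ Icc c C, Q t = P t := by
    intro t ht
    exact Qeq t ⟨le_trans hc.le ht.1, by linarith [ht.2]⟩
  set M : ℝ := max |P 0| |P (C + c)| with hMdef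
  have hM0 : 0 ≤ M := le_trans (abs_nonneg _) (le_max_left _ _)
  have Qbound : ∀ t, |Q t| ≤ M := by
    intro t
    have h1 : P 0 ≤ Q t := hPmono (Set.mem_Ici.2 (le_refl (0:ℝ))) (hclamp t).1 (hclamp t).1
    have h2 : Q t ≤ P (C + c) := hPmono (hclamp t).1 hCc (hclamp t).2
    have := le_max_left |P 0| |P (C + c)|
    have := le_max_right |P 0| |P (C + c)|
    rw [abs_le]
    constructor
    · nlinarith [neg_abs_le (P 0), le_abs_self (P 0)]
    · nlinarith [le_abs_self (P (C + c))]
  -- key monotonicity fact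
  have Qmonprod : ∀ a b : ℝ, 0 ≤ (Q a - Q b) * (a - b) := by
    intro a b
    rcases le_total a b with h | h
    · nlinarith [Qmono h]
    · nlinarith [Qmono h]
  -- the test sign function
  set φ : (Fin N → ℝ) → ℝ := fun x => if Q (ϱ x) ≤ q x then (-1:ℝ) else 1 with hφdef
  have φmeas : Measurable φ :=
    Measurable.ite (measurableSet_le (Qcont.measurable.comp hϱmeas) hqmeas)
      measurable_const measurable_const
  have φabs : ∀ x, |φ x| ≤ 1 := by
    intro x; by_cases h : Q (ϱ x) ≤ q x <;> simp [hφdef, h]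
  have φsign : ∀ x, (q x - Q (ϱ x)) * φ x = -|q x - Q (ϱ x)| := by
    intro x
    by_cases h : Q (ϱ x) ≤ q x
    · simp only [hφdef, if_pos h]
      rw [abs_of_nonneg (by linarith)]; ring
    · simp only [hφdef, if_neg h]
      rw [abs_of_neg (by linarith [lt_of_not_ge h])]; ring
  -- basic integrabilities
  have iQϱ : IntegrableOn (fun x => Q (ϱ x)) Ω volume :=
    hint _ M (Qcont.measurable.comp hϱmeas) (fun x _ => Qbound _)
  have hϱabs : ∀ x ∈ Ω, |ϱ x| ≤ C := by
    intro x hx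
    rcases hϱbnd x hx with ⟨h1, h2⟩
    rw [abs_le]; constructor <;> nlinarith
  have hϱnabs : ∀ n, ∀ x ∈ Ω, |ϱn n x| ≤ C := by
    intro n x hx
    rcases hbnd n x hx with ⟨h1, h2⟩
    rw [abs_le]; constructor <;> nlinarith
  have iqϱ : IntegrableOn (fun x => q x * ϱ x) Ω volume := by
    have : IntegrableOn (fun x => ϱ x * q x) Ω volume := by
      apply hqint.bdd_mul (c := C) hϱmeas.aestronglyMeasurable
      filter_upwards [ae_restrict_mem hΩmeas] with x hx
      simpa [Real.norm_eq_abs] using hϱabs x hx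
    simpa [mul_comm] using this
  -- Step 1: the Minty inequality for each perturbation size α
  have key : ∀ α : ℝ, 0 < α → α ≤ c →
      0 ≤ ∫ x in Ω, (q x - Q (ϱ x - α * φ x)) * φ x := by
    intro α hα hαc
    set z : (Fin N → ℝ) → ℝ := fun x => ϱ x - α * φ x with hzdef
    have zmeas : Measurable z := hϱmeas.sub (measurable_const.mul φmeas)
    have hzmem : ∀ x ∈ Ω, z x ∈ Icc (0:ℝ) (C + c) := by
      intro x hx
      rcases hϱbnd x hx with ⟨h1, h2⟩
      have := abs_le.1 (φabs x)
      constructor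
      · simp only [hzdef]; nlinarith [this.1, this.2]
      · simp only [hzdef]; nlinarith [this.1, this.2]
    have hzabs : ∀ x ∈ Ω, |z x| ≤ C + c := by
      intro x hx
      rcases hzmem x hx with ⟨h1, h2⟩
      rw [abs_le]; constructor <;> linarith
    have iz : IntegrableOn z Ω volume := hint z (C + c) zmeas hzabs
    have iQz : IntegrableOn (fun x => Q (z x)) Ω volume :=
      hint _ M (Qcont.measurable.comp zmeas) (fun x _ => Qbound _)
    -- products integrable
    have prodint : ∀ (f g : (Fin N → ℝ) → ℝ) (Mf Mg : ℝ), Measurable f → Measurable g →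
        (0 ≤ Mf) → (∀ x ∈ Ω, |f x| ≤ Mf) → (∀ x ∈ Ω, |g x| ≤ Mg) →
        IntegrableOn (fun x => f x * g x) Ω volume := by
      intro f g Mf Mg hf hg hMf hbf hbg
      apply hint _ (Mf * Mg) (hf.mul hg)
      intro x hx
      rw [Pi.mul_apply, abs_mul]
      exact mul_le_mul (hbf x hx) (hbg x hx) (abs_nonneg _) hMf
    have i1 : ∀ n, IntegrableOn (fun x => Q (ϱn n x) * ϱn n x) Ω volume := fun n =>
      prodint _ _ M C (Qcont.measurable.comp (hmeas n)) (hmeas n) hM0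
        (fun x _ => Qbound _) (hϱnabs n)
    have i2 : ∀ n, IntegrableOn (fun x => Q (ϱn n x) * z x) Ω volume := fun n =>
      prodint _ _ M (C + c) (Qcont.measurable.comp (hmeas n)) zmeas hM0
        (fun x _ => Qbound _) hzabs
    have i3 : ∀ n, IntegrableOn (fun x => Q (z x) * ϱn n x) Ω volume := fun n =>
      prodint _ _ M C (Qcont.measurable.comp zmeas) (hmeas n) hM0
        (fun x _ => Qbound _) (hϱnabs n)
    have i4 : IntegrableOn (fun x => Q (z x) * z x) Ω volume :=
      prodint _ _ M (C + c) (Qcont.measurable.comp zmeas) zmeas hM0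
        (fun x _ => Qbound _) hzabs
    -- nonnegativity for each n, expanded
    have hn : ∀ n, 0 ≤ ((∫ x in Ω, Q (ϱn n x) * ϱn n x) - ∫ x in Ω, Q (ϱn n x) * z x)
        - ((∫ x in Ω, Q (z x) * ϱn n x) - ∫ x in Ω, Q (z x) * z x) := by
      intro n
      have h0 : 0 ≤ ∫ x in Ω, (Q (ϱn n x) - Q (z x)) * (ϱn n x - z x) :=
        setIntegral_nonneg hΩmeas (fun x _ => Qmonprod _ _)
      have i12 : IntegrableOn (fun x => Q (ϱn n x) * ϱn n x - Q (ϱn n x) * z x) Ω volume :=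
        (i1 n).sub (i2 n)
      have i34 : IntegrableOn (fun x => Q (z x) * ϱn n x - Q (z x) * z x) Ω volume :=
        (i3 n).sub i4
      have e1 : ∫ x in Ω, (Q (ϱn n x) - Q (z x)) * (ϱn n x - z x)
          = ((∫ x in Ω, Q (ϱn n x) * ϱn n x) - ∫ x in Ω, Q (ϱn n x) * z x)
            - ((∫ x in Ω, Q (z x) * ϱn n x) - ∫ x in Ω, Q (z x) * z x) := by
        rw [← integral_sub (i1 n) (i2 n), ← integral_sub (i3 n) i4,
          ← integral_sub i12 i34]
        apply setIntegral_congr_fun hΩmeas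
        intro x _
        ring
      rw [e1] at h0
      exact h0
    -- limits of each term
    have hA : Tendsto (fun n => ∫ x in Ω, Q (ϱn n x) * ϱn n x) atTop
        (nhds (∫ x in Ω, q x * ϱ x)) := by
      apply hprod.congr
      intro n
      apply setIntegral_congr_fun hΩmeas
      intro x hx
      simp only [QeqIcc _ (hbnd n x hx)]
    have hB : Tendsto (fun n => ∫ x in Ω, Q (ϱn n x) * z x) atTop
        (nhds (∫ x in Ω, q x * z x)) := by
      apply (hweak2 z iz).congr
      intro n
      apply setIntegral_congr_fun hΩmeas
      intro x hx
      simp only [QeqIcc _ (hbnd n x hx)]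
    have hC : Tendsto (fun n => ∫ x in Ω, Q (z x) * ϱn n x) atTop
        (nhds (∫ x in Ω, Q (z x) * ϱ x)) := by
      have h := hweak1 (fun x => Q (z x)) iQz
      have e2 : ∀ (g : (Fin N → ℝ) → ℝ), (∫ x in Ω, g x * Q (z x)) = ∫ x in Ω, Q (z x) * g x := by
        intro g
        apply setIntegral_congr_fun hΩmeas
        intro x _
        ring
      rw [e2] at h
      apply h.congr
      intro n
      exact e2 (ϱn n)
    have hlim : Tendsto (fun n => ((∫ x in Ω, Q (ϱn n x) * ϱn n x) - ∫ x in Ω, Q (ϱn n x) * z x)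
        - ((∫ x in Ω, Q (z x) * ϱn n x) - ∫ x in Ω, Q (z x) * z x)) atTop
        (nhds (((∫ x in Ω, q x * ϱ x) - ∫ x in Ω, q x * z x)
          - ((∫ x in Ω, Q (z x) * ϱ x) - ∫ x in Ω, Q (z x) * z x))) :=
      (hA.sub hB).sub (hC.sub tendsto_const_nhds)
    have hpos : 0 ≤ ((∫ x in Ω, q x * ϱ x) - ∫ x in Ω, q x * z x)
          - ((∫ x in Ω, Q (z x) * ϱ x) - ∫ x in Ω, Q (z x) * z x) :=
      ge_of_tendsto' hlim hn
    -- rewrite the limit as α times the target integral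
    have iqz : IntegrableOn (fun x => q x * z x) Ω volume := by
      have : IntegrableOn (fun x => z x * q x) Ω volume := by
        apply hqint.bdd_mul (c := C + c) zmeas.aestronglyMeasurable
        filter_upwards [ae_restrict_mem hΩmeas] with x hx
        simpa [Real.norm_eq_abs] using hzabs x hx
      simpa [mul_comm] using this
    have iQzϱ : IntegrableOn (fun x => Q (z x) * ϱ x) Ω volume :=
      prodint _ _ M C (Qcont.measurable.comp zmeas) hϱmeas hM0
        (fun x _ => Qbound _) hϱabs
    have e3 : ((∫ x in Ω, q x * ϱ x) - ∫ x in Ω, q x * z x)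
          - ((∫ x in Ω, Q (z x) * ϱ x) - ∫ x in Ω, Q (z x) * z x)
        = α * ∫ x in Ω, (q x - Q (z x)) * φ x := by
      have iA : IntegrableOn (fun x => q x * ϱ x - q x * z x) Ω volume := iqϱ.sub iqz
      have iB : IntegrableOn (fun x => Q (z x) * ϱ x - Q (z x) * z x) Ω volume := iQzϱ.sub i4
      rw [← integral_sub iqϱ iqz, ← integral_sub iQzϱ i4,
        ← integral_sub iA iB, ← integral_const_mul]
      apply setIntegral_congr_fun hΩmeas
      intro x _
      simp only [hzdef]
      ring
    rw [e3] at hpos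
    nlinarith [hpos, hα]
  -- Step 2: let α → 0 along the sequence c/(k+2)
  set αk : ℕ → ℝ := fun k => c / (k + 2) with hαkdef
  have hαkpos : ∀ k, 0 < αk k := by
    intro k
    apply div_pos hc
    positivity
  have hαkle : ∀ k, αk k ≤ c := by
    intro k
    apply div_le_self hc.le
    have : (0:ℝ) ≤ (k:ℝ) := Nat.cast_nonneg k
    linarith
  have hαk0 : Tendsto αk atTop (nhds 0) := by
    apply Tendsto.div_atTop tendsto_const_nhds
    apply tendsto_atTop_add_const_right _ 2 tendsto_natCast_atTop_atTop
  -- dominated convergence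
  have hDCT : Tendsto (fun k => ∫ x in Ω, (q x - Q (ϱ x - αk k * φ x)) * φ x) atTop
      (nhds (∫ x in Ω, (q x - Q (ϱ x)) * φ x)) := by
    apply tendsto_integral_of_dominated_convergence (fun x => |q x| + M)
    · intro k
      exact ((hqmeas.sub (Qcont.measurable.comp
        (hϱmeas.sub (measurable_const.mul φmeas)))).mul φmeas).aestronglyMeasurable
    · exact hqint.abs.add (integrableOn_const hfin)
    · intro k
      apply Eventually.of_forall
      intro x
      rw [Real.norm_eq_abs, abs_mul]
      calc |q x - Q (ϱ x - αk k * φ x)| * |φ x|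
          ≤ (|q x| + M) * 1 := by
            apply mul_le_mul _ (φabs x) (abs_nonneg _) (by positivity)
            calc |q x - Q (ϱ x - αk k * φ x)| ≤ |q x| + |Q (ϱ x - αk k * φ x)| := abs_sub _ _
              _ ≤ |q x| + M := by linarith [Qbound (ϱ x - αk k * φ x)]
        _ = |q x| + M := mul_one _
    · apply Eventually.of_forall
      intro x
      apply Tendsto.mul_const
      apply Tendsto.const_sub
      have harg : Tendsto (fun k => ϱ x - αk k * φ x) atTop (nhds (ϱ x)) := by
        have h1 : Tendsto (fun k : ℕ => ϱ x - αk k * φ x) atTop (nhds (ϱ x - 0 * φ x)) :=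
          Tendsto.const_sub _ (hαk0.mul_const (φ x))
        simpa using h1
      exact (Qcont.tendsto (ϱ x)).comp harg
  have hfinal : 0 ≤ ∫ x in Ω, (q x - Q (ϱ x)) * φ x :=
    ge_of_tendsto' hDCT (fun k => key (αk k) (hαkpos k) (hαkle k))
  -- conclude
  have habsint : IntegrableOn (fun x => |q x - Q (ϱ x)|) Ω volume := (hqint.sub iQϱ).abs
  have e4 : (∫ x in Ω, (q x - Q (ϱ x)) * φ x) = -∫ x in Ω, |q x - Q (ϱ x)| := by
    rw [← integral_neg]
    apply setIntegral_congr_fun hΩmeas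
    intro x _
    exact φsign x
  have h0 : (∫ x in Ω, |q x - Q (ϱ x)|) = 0 := by
    have hge : 0 ≤ ∫ x in Ω, |q x - Q (ϱ x)| :=
      setIntegral_nonneg hΩmeas (fun x _ => abs_nonneg _)
    rw [e4] at hfinal
    linarith
  have hae : (fun x => |q x - Q (ϱ x)|) =ᵐ[volume.restrict Ω] 0 :=
    (integral_eq_zero_iff_of_nonneg (fun x => abs_nonneg _) habsint).1 h0
  filter_upwards [hae, ae_restrict_mem hΩmeas] with x hx hxΩ
  have : q x = Q (ϱ x) := by
    have := hx
    simp only [Pi.zero_apply, abs_eq_zero, sub_eq_zero] at this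
    exact this
  rw [this, QeqIcc _ (hϱbnd x hxΩ)]
end
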